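/- Every latin square L of order n contains at least 3n⁴ + n³ − 9n² + 6n cuboctahedra. -/

import Mathlib

open Finset

/-- A latin square of order `n`: all rows and all columns are bijections. -/
def IsLatinSquare {n : ℕ} (L : Fin n → Fin n → Fin n) : Prop :=
  (∀ r, Function.Bijective (fun c => L r c)) ∧
  (∀ c, Function.Bijective (fun r => L r c))


/-- The number of cuboctahedra of the latin square `L`: ordered pairs of quadruples
`((r₁, r₂, c₁, c₂), (r₁', r₂', c₁', c₂'))` such that `L r_a c_b = L r'_a c'_b`
for all `a, b ∈ {1, 2}`. -/
noncomputable def lsCuboctCount {n : ℕ} (L : Fin n → Fin n → Fin n) : ℕ :=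
  Set.ncard {p : (Fin n × Fin n × Fin n × Fin n) × (Fin n × Fin n × Fin n × Fin n) |
    match p with
    | ((r₁, r₂, c₁, c₂), (r₁', r₂', c₁', c₂')) =>
      L r₁ c₁ = L r₁' c₁' ∧ L r₁ c₂ = L r₁' c₂' ∧
      L r₂ c₁ = L r₂' c₁' ∧ L r₂ c₂ = L r₂' c₂'}

namespace LsAux

variable {n : ℕ} {L : Fin n → Fin n → Fin n}

noncomputable def rinv (hL : IsLatinSquare L) (r a : Fin n) : Fin n :=
  (Equiv.ofBijective _ (hL.1 r)).symm a

noncomputable def cinv (hL : IsLatinSquare L) (c a : Fin n) : Fin n :=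
  (Equiv.ofBijective _ (hL.2 c)).symm a

lemma L_rinv (hL : IsLatinSquare L) (r a : Fin n) : L r (rinv hL r a) = a :=
  (Equiv.ofBijective _ (hL.1 r)).apply_symm_apply a

lemma L_cinv (hL : IsLatinSquare L) (c a : Fin n) : L (cinv hL c a) c = a :=
  (Equiv.ofBijective _ (hL.2 c)).apply_symm_apply a

lemma row_inj (hL : IsLatinSquare L) {r c c' : Fin n} (h : L r c = L r c') : c = c' :=
  (hL.1 r).1 h

lemma col_inj (hL : IsLatinSquare L) {c r r' : Fin n} (h : L r c = L r' c) : r = r' :=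
  (hL.2 c).1 h

lemma rinv_eq (hL : IsLatinSquare L) {r c a : Fin n} (h : L r c = a) : rinv hL r a = c :=
  row_inj hL (show L r (rinv hL r a) = L r c by rw [L_rinv hL, h])

lemma cinv_eq (hL : IsLatinSquare L) {c r a : Fin n} (h : L r c = a) : cinv hL c a = r :=
  col_inj hL (show L (cinv hL c a) c = L r c by rw [L_cinv hL, h])

/-- The 2×2 pattern of a quadruple. -/
def pat (L : Fin n → Fin n → Fin n) (q : Fin n × Fin n × Fin n × Fin n) :
    Fin n × Fin n × Fin n × Fin n :=
  (L q.1 q.2.2.1, L q.1 q.2.2.2, L q.2.1 q.2.2.1, L q.2.1 q.2.2.2)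

/-- The number of quadruples with the same pattern as `q`. -/
def g (L : Fin n → Fin n → Fin n) (q : Fin n × Fin n × Fin n × Fin n) : ℕ :=
  (Finset.univ.filter fun q' => pat L q = pat L q').card

lemma count_eq (L : Fin n → Fin n → Fin n) :
    lsCuboctCount L = ∑ q : Fin n × Fin n × Fin n × Fin n, g L q := by
  have hstep : lsCuboctCount L =
      (Finset.univ.filter fun p : (Fin n × Fin n × Fin n × Fin n) ×
          (Fin n × Fin n × Fin n × Fin n) => pat L p.1 = pat L p.2).card := by
    rw [← Set.ncard_coe_finset]
    unfold lsCuboctCount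
    congr 1
    ext ⟨⟨r₁, r₂, c₁, c₂⟩, ⟨r₁', r₂', c₁', c₂'⟩⟩
    simp [pat, Prod.ext_iff, and_assoc]
  rw [hstep, Finset.card_eq_sum_card_fiberwise (f := Prod.fst) (t := Finset.univ)
    (fun x _ => Finset.mem_univ _)]
  refine Finset.sum_congr rfl fun q _ => ?_
  refine Finset.card_nbij' (fun p => p.2) (fun q' => (q, q')) ?_ ?_ ?_ ?_
  · intro p hp
    simp only [Finset.mem_coe, Finset.mem_filter, Finset.mem_univ, true_and] at hp ⊢
    rw [← hp.2]
    exact hp.1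
  · intro q' hq'
    simp only [Finset.mem_coe, Finset.mem_filter, Finset.mem_univ, true_and] at hq' ⊢
    exact ⟨hq', trivial⟩
  · intro p hp
    simp only [Finset.mem_coe, Finset.mem_filter] at hp
    exact Prod.ext hp.2.symm rfl
  · intro q' _
    rfl

lemma gA (hL : IsLatinSquare L) (r₁ r₂ c : Fin n) : n ≤ g L (r₁, r₂, c, c) := by
  have key := Finset.card_le_card_of_injOn
    (s := (Finset.univ : Finset (Fin n)))
    (t := Finset.univ.filter fun q' => pat L (r₁, r₂, c, c) = pat L q')
    (fun c' => (cinv hL c' (L r₁ c), cinv hL c' (L r₂ c), c', c'))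
    (fun c' _ => by
      simp only [Finset.mem_filter, Finset.mem_univ, true_and]
      simp [pat, L_cinv hL])
    (fun x _ y _ hxy => by simpa using congrArg (fun q => q.2.2.1) hxy)
  simpa [g] using key

lemma gB (hL : IsLatinSquare L) (r c₁ c₂ : Fin n) : n ≤ g L (r, r, c₁, c₂) := by
  have key := Finset.card_le_card_of_injOn
    (s := (Finset.univ : Finset (Fin n)))
    (t := Finset.univ.filter fun q' => pat L (r, r, c₁, c₂) = pat L q')
    (fun r' => (r', r', rinv hL r' (L r c₁), rinv hL r' (L r c₂)))
    (fun r' _ => by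
      simp only [Finset.mem_filter, Finset.mem_univ, true_and]
      simp [pat, L_rinv hL])
    (fun x _ y _ hxy => by simpa using congrArg (fun q => q.1) hxy)
  simpa [g] using key

noncomputable def psi (hL : IsLatinSquare L) (y : Fin n × Fin n × Fin n) (s : Fin n) :
    Fin n × Fin n × Fin n × Fin n :=
  (s, cinv hL (rinv hL s y.1) y.2.2, rinv hL s y.1, rinv hL s y.2.1)

noncomputable def hmap (hL : IsLatinSquare L) (y : Fin n × Fin n × Fin n) (s : Fin n) :
    Fin n :=
  L (cinv hL (rinv hL s y.1) y.2.2) (rinv hL s y.2.1)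

lemma pat_psi (hL : IsLatinSquare L) (y : Fin n × Fin n × Fin n) (s : Fin n) :
    pat L (psi hL y s) = (y.1, y.2.1, y.2.2, hmap hL y s) := by
  simp [pat, psi, hmap, L_rinv, L_cinv]

lemma psi_r_ne (hL : IsLatinSquare L) {y : Fin n × Fin n × Fin n} (hac : y.1 ≠ y.2.2)
    (s : Fin n) : s ≠ cinv hL (rinv hL s y.1) y.2.2 := by
  intro h
  apply hac
  calc y.1 = L s (rinv hL s y.1) := (L_rinv hL s y.1).symm
    _ = L (cinv hL (rinv hL s y.1) y.2.2) (rinv hL s y.1) := by rw [← h]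
    _ = y.2.2 := L_cinv hL _ _

lemma psi_c_ne (hL : IsLatinSquare L) {y : Fin n × Fin n × Fin n} (hab : y.1 ≠ y.2.1)
    (s : Fin n) : rinv hL s y.1 ≠ rinv hL s y.2.1 := by
  intro h
  apply hab
  calc y.1 = L s (rinv hL s y.1) := (L_rinv hL s y.1).symm
    _ = L s (rinv hL s y.2.1) := by rw [h]
    _ = y.2.1 := L_rinv hL s _

lemma hmap_ne_b (hL : IsLatinSquare L) {y : Fin n × Fin n × Fin n} (hac : y.1 ≠ y.2.2)
    (s : Fin n) : hmap hL y s ≠ y.2.1 := by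
  intro h
  have hb : L s (rinv hL s y.2.1) = y.2.1 := L_rinv hL s _
  have : cinv hL (rinv hL s y.1) y.2.2 = s := col_inj hL (h.trans hb.symm)
  exact psi_r_ne hL hac s this.symm

lemma hmap_ne_c (hL : IsLatinSquare L) {y : Fin n × Fin n × Fin n} (hab : y.1 ≠ y.2.1)
    (s : Fin n) : hmap hL y s ≠ y.2.2 := by
  intro h
  have hc : L (cinv hL (rinv hL s y.1) y.2.2) (rinv hL s y.1) = y.2.2 := L_cinv hL _ _
  have : rinv hL s y.2.1 = rinv hL s y.1 := row_inj hL (h.trans hc.symm)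
  exact psi_c_ne hL hab s this.symm

def phi (L : Fin n → Fin n → Fin n) (q : Fin n × Fin n × Fin n × Fin n) :
    (Fin n × Fin n × Fin n) × Fin n :=
  ((L q.1 q.2.2.1, L q.1 q.2.2.2, L q.2.1 q.2.2.1), q.1)

lemma psi_phi (hL : IsLatinSquare L) (q : Fin n × Fin n × Fin n × Fin n) :
    psi hL (phi L q).1 (phi L q).2 = q := by
  obtain ⟨r₁, r₂, c₁, c₂⟩ := q
  simp only [phi, psi]
  rw [rinv_eq hL (rfl : L r₁ c₁ = _), rinv_eq hL (rfl : L r₁ c₂ = _),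
    cinv_eq hL (rfl : L r₂ c₁ = _)]

lemma phi_psi (hL : IsLatinSquare L) (y : Fin n × Fin n × Fin n) (s : Fin n) :
    phi L (psi hL y s) = (y, s) := by
  simp [phi, psi, L_rinv, L_cinv]

lemma gC_bound (hL : IsLatinSquare L) (y : Fin n × Fin n × Fin n) (s : Fin n) :
    (Finset.univ.filter fun t => hmap hL y t = hmap hL y s).card ≤ g L (psi hL y s) := by
  apply Finset.card_le_card_of_injOn (fun t => psi hL y t)
  · intro t ht
    simp only [Finset.mem_coe, Finset.mem_filter, Finset.mem_univ, true_and] at ht ⊢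
    rw [pat_psi, pat_psi, ht]
  · intro x _ z _ hxz
    simpa [psi] using congrArg (fun q => q.1) hxz

lemma pairs_lb (h : Fin n → Fin n) (S : Finset (Fin n)) (hS : ∀ t, h t ∉ S)
    (hn : 0 < n) :
    n + 2 * S.card ≤ ∑ s : Fin n, (Finset.univ.filter fun t => h t = h s).card := by
  set m : Fin n → ℕ := fun d => (Finset.univ.filter fun t => h t = d).card with hm
  have hfib : ∑ s : Fin n, m (h s) = ∑ d : Fin n, m d * m d := by
    rw [← Finset.sum_fiberwise Finset.univ h (fun s => m (h s))]
    refine Finset.sum_congr rfl fun d _ => ?_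
    have hcong : ∀ s ∈ Finset.univ.filter (fun s => h s = d), m (h s) = m d := by
      intro s hs
      rw [(Finset.mem_filter.mp hs).2]
    rw [Finset.sum_congr rfl hcong, Finset.sum_const, smul_eq_mul]
  have hsum : ∑ d : Fin n, m d = n := by
    have := Finset.card_eq_sum_card_fiberwise
      (f := h) (s := Finset.univ) (t := Finset.univ) (fun x _ => Finset.mem_univ _)
    simpa [hm] using this.symm
  set V : Finset (Fin n) := Finset.univ.filter (fun d => m d ≠ 0) with hV
  have hVsub : V ⊆ Finset.univ \ S := by
    intro d hd
    simp only [hV, Finset.mem_filter] at hd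
    obtain ⟨t, ht⟩ : ∃ t, h t = d := by
      obtain ⟨t, ht⟩ := Finset.card_ne_zero.mp hd.2
      exact ⟨t, (Finset.mem_filter.mp ht).2⟩
    simp only [Finset.mem_sdiff, Finset.mem_univ, true_and]
    exact ht ▸ hS t
  have hVcard : V.card ≤ n - S.card := by
    have := Finset.card_le_card hVsub
    rwa [Finset.card_sdiff_of_subset (Finset.subset_univ S), Finset.card_univ,
      Fintype.card_fin] at this
  have hScard : S.card ≤ n := by
    simpa using Finset.card_le_card (Finset.subset_univ S)
  have hVsum : ∑ d ∈ V, m d = n :=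
    (Finset.sum_subset (Finset.subset_univ V)
      (fun d _ hd => by simpa [hV] using hd)).trans hsum
  have hVsq : ∑ d : Fin n, m d * m d = ∑ d ∈ V, m d * m d := by
    refine (Finset.sum_subset (Finset.subset_univ V)
      (fun d _ hd => ?_)).symm
    have : m d = 0 := by simpa [hV] using hd
    simp [this]
  -- now work in ℤ
  have key : (n : ℤ) + 2 * S.card ≤ ∑ d ∈ V, (m d : ℤ) * m d := by
    have h1 : ∀ d ∈ V, (3 : ℤ) * m d - 2 ≤ (m d : ℤ) * m d := by
      intro d hd
      have : 1 ≤ m d := Nat.one_le_iff_ne_zero.mpr (by simpa [hV] using hd)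
      have h12 : m d = 1 ∨ 2 ≤ m d := by omega
      rcases h12 with h12 | h12
      · rw [h12]; norm_num
      · have : (2 : ℤ) ≤ (m d : ℤ) := by exact_mod_cast h12
        nlinarith
    have h2 : ∑ d ∈ V, ((3 : ℤ) * m d - 2) ≤ ∑ d ∈ V, (m d : ℤ) * m d :=
      Finset.sum_le_sum h1
    have h3 : ∑ d ∈ V, ((3 : ℤ) * m d - 2) = 3 * n - 2 * V.card := by
      rw [Finset.sum_sub_distrib, ← Finset.mul_sum, Finset.sum_const, nsmul_eq_mul]
      have : ∑ d ∈ V, (m d : ℤ) = n := by exact_mod_cast congrArg (Nat.cast (R := ℤ)) hVsum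
      rw [this]; ring
    have h4 : (V.card : ℤ) ≤ (n : ℤ) - S.card := by
      have := (Nat.cast_le (α := ℤ)).mpr hVcard
      rwa [Nat.cast_sub hScard] at this
    linarith
  have : (n : ℤ) + 2 * S.card ≤ ((∑ s : Fin n, (Finset.univ.filter fun t => h t = h s).card : ℕ) : ℤ) := by
    push_cast
    calc (n : ℤ) + 2 * S.card ≤ ∑ d ∈ V, (m d : ℤ) * m d := key
      _ = ((∑ d : Fin n, m d * m d : ℕ) : ℤ) := by rw [hVsq]; push_cast; rfl
      _ = ((∑ s : Fin n, m (h s) : ℕ) : ℤ) := by rw [hfib]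
      _ = _ := by push_cast; rfl
  exact_mod_cast this

lemma sum_ite_ne {α : Type*} [DecidableEq α] (s : Finset α) (a : α) (f : α → ℤ) :
    ∑ x ∈ s, (if a = x then 0 else f x) = (∑ x ∈ s, f x) - (if a ∈ s then f a else 0) := by
  rw [← Finset.sum_ite_eq s a f, ← Finset.sum_sub_distrib]
  exact Finset.sum_congr rfl fun x _ => by by_cases h : a = x <;> simp [h]

end LsAux

open LsAux
/-- Every latin square of order `n` contains at least `3n⁴ + n³ - 9n² + 6n`
cuboctahedra. -/
theorem lsCuboctCount_lower_bound {n : ℕ}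
    (L : Fin n → Fin n → Fin n) (hL : IsLatinSquare L) :
    3 * (n : ℤ) ^ 4 + (n : ℤ) ^ 3 - 9 * (n : ℤ) ^ 2 + 6 * (n : ℤ) ≤
      (lsCuboctCount L : ℤ) := by
  set T : Finset (Fin n × Fin n × Fin n) :=
    Finset.univ.filter (fun y => ¬y.1 = y.2.1 ∧ ¬y.1 = y.2.2) with hT_def
  -- split the sum over quadruples into three classes
  have hsplit :
      ∑ q : Fin n × Fin n × Fin n × Fin n, g L q =
        (∑ q ∈ Finset.univ.filter (fun q : Fin n × Fin n × Fin n × Fin n =>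
            q.2.2.1 = q.2.2.2), g L q)
        + ((∑ q ∈ Finset.univ.filter (fun q : Fin n × Fin n × Fin n × Fin n =>
            ¬q.2.2.1 = q.2.2.2 ∧ q.1 = q.2.1), g L q)
        + (∑ q ∈ Finset.univ.filter (fun q : Fin n × Fin n × Fin n × Fin n =>
            ¬q.2.2.1 = q.2.2.2 ∧ ¬q.1 = q.2.1), g L q)) := by
    rw [← Finset.sum_filter_add_sum_filter_not Finset.univ
      (fun q : Fin n × Fin n × Fin n × Fin n => q.2.2.1 = q.2.2.2) (g L)]
    congr 1
    rw [← Finset.sum_filter_add_sum_filter_not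
      (Finset.univ.filter (fun q : Fin n × Fin n × Fin n × Fin n => ¬q.2.2.1 = q.2.2.2))
      (fun q => q.1 = q.2.1) (g L), Finset.filter_filter, Finset.filter_filter]
  -- class A : c₁ = c₂
  have hSA : (n * n * n) * n ≤ ∑ q ∈ Finset.univ.filter
      (fun q : Fin n × Fin n × Fin n × Fin n => q.2.2.1 = q.2.2.2), g L q := by
    have hre : ∑ q ∈ Finset.univ.filter
        (fun q : Fin n × Fin n × Fin n × Fin n => q.2.2.1 = q.2.2.2), g L q
        = ∑ x : Fin n × Fin n × Fin n, g L (x.1, x.2.1, x.2.2, x.2.2) := by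
      refine Finset.sum_nbij' (fun q => (q.1, q.2.1, q.2.2.1))
        (fun x => (x.1, x.2.1, x.2.2, x.2.2)) (fun q _ => Finset.mem_univ _) ?_ ?_
        (fun x _ => rfl) ?_
      · intro x _
        simp only [Finset.mem_filter, Finset.mem_univ, true_and]
      · intro q hq
        simp only [Finset.mem_filter, Finset.mem_univ, true_and] at hq
        obtain ⟨r₁, r₂, c₁, c₂⟩ := q
        cases hq
        rfl
      · intro q hq
        simp only [Finset.mem_filter, Finset.mem_univ, true_and] at hq
        obtain ⟨r₁, r₂, c₁, c₂⟩ := q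
        cases hq
        rfl
    rw [hre]
    have hb := Finset.card_nsmul_le_sum Finset.univ
      (fun x : Fin n × Fin n × Fin n => g L (x.1, x.2.1, x.2.2, x.2.2)) n
      (fun x _ => gA hL x.1 x.2.1 x.2.2)
    simpa [mul_assoc] using hb
  -- class B : c₁ ≠ c₂, r₁ = r₂
  have hSB : (n * (n * n - n)) * n ≤ ∑ q ∈ Finset.univ.filter
      (fun q : Fin n × Fin n × Fin n × Fin n =>
        ¬q.2.2.1 = q.2.2.2 ∧ q.1 = q.2.1), g L q := by
    have hre : ∑ q ∈ Finset.univ.filter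
        (fun q : Fin n × Fin n × Fin n × Fin n => ¬q.2.2.1 = q.2.2.2 ∧ q.1 = q.2.1), g L q
        = ∑ x ∈ Finset.univ.filter
            (fun x : Fin n × Fin n × Fin n => ¬x.2.1 = x.2.2),
            g L (x.1, x.1, x.2.1, x.2.2) := by
      refine Finset.sum_nbij' (fun q => (q.1, q.2.2.1, q.2.2.2))
        (fun x => (x.1, x.1, x.2.1, x.2.2)) ?_ ?_ ?_ (fun x _ => rfl) ?_
      · intro q hq
        simp only [Finset.mem_filter, Finset.mem_univ, true_and] at hq ⊢
        exact hq.1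
      · intro x hx
        simp only [Finset.mem_filter, Finset.mem_univ, true_and] at hx ⊢
        exact ⟨hx, trivial⟩
      · intro q hq
        simp only [Finset.mem_filter, Finset.mem_univ, true_and] at hq
        obtain ⟨r₁, r₂, c₁, c₂⟩ := q
        obtain ⟨-, h⟩ := hq
        cases h
        rfl
      · intro q hq
        simp only [Finset.mem_filter, Finset.mem_univ, true_and] at hq
        obtain ⟨r₁, r₂, c₁, c₂⟩ := q
        obtain ⟨-, h⟩ := hq
        cases h
        rfl
    rw [hre]
    have hcard : (Finset.univ.filter
        (fun x : Fin n × Fin n × Fin n => ¬x.2.1 = x.2.2)).card = n * (n * n - n) := by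
      have heq : Finset.univ.filter (fun x : Fin n × Fin n × Fin n => ¬x.2.1 = x.2.2)
          = Finset.univ ×ˢ Finset.univ.offDiag := by
        ext ⟨r, c₁, c₂⟩
        simp [Finset.mem_offDiag]
      rw [heq, Finset.card_product, Finset.offDiag_card]
      simp
    have hb := Finset.card_nsmul_le_sum (Finset.univ.filter
        (fun x : Fin n × Fin n × Fin n => ¬x.2.1 = x.2.2))
      (fun x : Fin n × Fin n × Fin n => g L (x.1, x.1, x.2.1, x.2.2)) n
      (fun x _ => gB hL x.1 x.2.1 x.2.2)
    rwa [hcard, smul_eq_mul] at hb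
  -- class C : c₁ ≠ c₂, r₁ ≠ r₂
  have hSC : (∑ y ∈ T, (n + 2 * ({y.2.1, y.2.2} : Finset (Fin n)).card))
      ≤ ∑ q ∈ Finset.univ.filter (fun q : Fin n × Fin n × Fin n × Fin n =>
          ¬q.2.2.1 = q.2.2.2 ∧ ¬q.1 = q.2.1), g L q := by
    have hre : ∑ q ∈ Finset.univ.filter (fun q : Fin n × Fin n × Fin n × Fin n =>
          ¬q.2.2.1 = q.2.2.2 ∧ ¬q.1 = q.2.1), g L q
        = ∑ x ∈ T ×ˢ (Finset.univ : Finset (Fin n)), g L (psi hL x.1 x.2) := by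
      refine Finset.sum_nbij' (fun q => phi L q) (fun x => psi hL x.1 x.2) ?_ ?_
        (fun q _ => psi_phi hL q) (fun x _ => phi_psi hL x.1 x.2)
        (fun q _ => by rw [psi_phi hL q])
      · intro q hq
        simp only [Finset.mem_filter, Finset.mem_univ, true_and] at hq
        simp only [hT_def, Finset.mem_product, Finset.mem_filter, Finset.mem_univ,
          true_and, and_true]
        obtain ⟨r₁, r₂, c₁, c₂⟩ := q
        obtain ⟨hc, hr⟩ := hq
        exact ⟨fun h => hc (row_inj hL h), fun h => hr (col_inj hL h)⟩
      · intro x hx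
        simp only [hT_def, Finset.mem_product, Finset.mem_filter, Finset.mem_univ,
          true_and, and_true] at hx
        simp only [Finset.mem_filter, Finset.mem_univ, true_and]
        exact ⟨psi_c_ne hL hx.1 x.2, psi_r_ne hL hx.2 x.2⟩
    rw [hre, Finset.sum_product]
    refine Finset.sum_le_sum fun y hy => ?_
    simp only [hT_def, Finset.mem_filter, Finset.mem_univ, true_and] at hy
    have havoid : ∀ t, hmap hL y t ∉ ({y.2.1, y.2.2} : Finset (Fin n)) := by
      intro t
      simp only [Finset.mem_insert, Finset.mem_singleton]
      push_neg
      exact ⟨hmap_ne_b hL hy.2 t, hmap_ne_c hL hy.1 t⟩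
    have hpairs := pairs_lb (hmap hL y) {y.2.1, y.2.2} havoid y.1.pos
    exact hpairs.trans (Finset.sum_le_sum fun s _ => gC_bound hL y s)
  -- total count in ℕ
  have hcount : (n * n * n) * n + ((n * (n * n - n)) * n
      + ∑ y ∈ T, (n + 2 * ({y.2.1, y.2.2} : Finset (Fin n)).card))
      ≤ lsCuboctCount L := by
    rw [count_eq L, hsplit]
    exact add_le_add hSA (add_le_add hSB hSC)
  -- evaluate the T-sum over ℤ
  have hTsum : ((∑ y ∈ T, (n + 2 * ({y.2.1, y.2.2} : Finset (Fin n)).card) : ℕ) : ℤ)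
      = (n : ℤ) * ((n : ℤ) - 1) * ((n : ℤ) ^ 2 + 3 * (n : ℤ) - 6) := by
    push_cast
    rw [hT_def, Finset.sum_filter, Fintype.sum_prod_type]
    have hinner : ∀ a b : Fin n,
        (∑ c : Fin n, if ¬a = b ∧ ¬a = c then
            ((n : ℤ) + 2 * (({b, c} : Finset (Fin n)).card : ℤ)) else 0)
        = if a = b then 0 else ((n : ℤ) ^ 2 + 3 * (n : ℤ) - 6) := by
      intro a b
      by_cases hab : a = b
      · simp [hab]
      · have h1 : ∀ c : Fin n, (if ¬a = b ∧ ¬a = c then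
            ((n : ℤ) + 2 * (({b, c} : Finset (Fin n)).card : ℤ)) else 0)
            = (if a = c then 0 else
                ((n : ℤ) + 2 * (({b, c} : Finset (Fin n)).card : ℤ))) := by
          intro c
          by_cases h : a = c <;> simp [h, hab]
        rw [Finset.sum_congr rfl (fun c _ => h1 c), sum_ite_ne]
        have hpaircard : ∀ c : Fin n, (({b, c} : Finset (Fin n)).card : ℤ)
            = 2 - (if b = c then 1 else 0) := by
          intro c
          by_cases h : b = c
          · subst h; simp
          · rw [Finset.card_pair h]; simp [h]
        have h2 : ∑ c : Fin n, ((n : ℤ) + 2 * (({b, c} : Finset (Fin n)).card : ℤ))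
            = (n : ℤ) * n + 2 * (2 * n - 1) := by
          rw [Finset.sum_add_distrib, Finset.sum_const, Finset.card_univ,
            Fintype.card_fin, nsmul_eq_mul, ← Finset.mul_sum,
            Finset.sum_congr rfl (fun c _ => hpaircard c), Finset.sum_sub_distrib,
            Finset.sum_const, Finset.card_univ, Fintype.card_fin, nsmul_eq_mul,
            Finset.sum_ite_eq]
          simp
          ring
        have hba : ({b, a} : Finset (Fin n)).card = 2 :=
          Finset.card_pair (fun h => hab h.symm)
        rw [h2]
        simp only [Finset.mem_univ, if_true, if_neg hab, hba]
        push_cast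
        ring
    rw [Finset.sum_congr rfl (fun a _ => by
      rw [Fintype.sum_prod_type, Finset.sum_congr rfl (fun b _ => hinner a b)])]
    rw [Finset.sum_congr rfl (fun a _ => sum_ite_ne Finset.univ a
      (fun _ => (n : ℤ) ^ 2 + 3 * (n : ℤ) - 6))]
    simp only [Finset.sum_const, Finset.card_univ, Fintype.card_fin, nsmul_eq_mul,
      Finset.mem_univ, if_true]
    ring
  -- final arithmetic
  have hnn : n ≤ n * n := by
    rcases Nat.eq_zero_or_pos n with h | h
    · simp [h]
    · exact Nat.le_mul_of_pos_left n h
  have hcast : (((n * n * n) * n + ((n * (n * n - n)) * n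
      + ∑ y ∈ T, (n + 2 * ({y.2.1, y.2.2} : Finset (Fin n)).card)) : ℕ) : ℤ)
      = 3 * (n : ℤ) ^ 4 + (n : ℤ) ^ 3 - 9 * (n : ℤ) ^ 2 + 6 * (n : ℤ) := by
    rw [Nat.cast_add, Nat.cast_add, hTsum]
    push_cast [Nat.cast_sub hnn]
    ring
  calc 3 * (n : ℤ) ^ 4 + (n : ℤ) ^ 3 - 9 * (n : ℤ) ^ 2 + 6 * (n : ℤ)
      = (((n * n * n) * n + ((n * (n * n - n)) * n
          + ∑ y ∈ T, (n + 2 * ({y.2.1, y.2.2} : Finset (Fin n)).card)) : ℕ) : ℤ) :=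
        hcast.symm
    _ ≤ (lsCuboctCount L : ℤ) := Nat.cast_le.mpr hcount
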